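/- Let A ⊆ B be an inclusion of fields and let f ∈ A[[t]] be a power series which, regarded as an element of B[[t]], is rational. Then f is rational as an element of A[[t]]. -/

import Mathlib

/-- A power series over a commutative ring `A` is rational if there is a polynomial `q` with
constant term `1` such that `q·f` is a polynomial. -/
def IsRationalSeries {A : Type*} [CommRing A] (f : PowerSeries A) : Prop :=
  ∃ q p : Polynomial A, q.coeff 0 = 1 ∧ (q : PowerSeries A) * f = (p : PowerSeries A)

/-- Let `A ⊆ B` be an inclusion of fields.  A power series over `A` which becomes rational
when regarded as a power series over `B` is already rational over `A`. -/
theorem rational_over_subfield_of_rational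
    (A B : Type*) [Field A] [Field B] [Algebra A B]
    (f : PowerSeries A)
    (hf : IsRationalSeries (PowerSeries.map (algebraMap A B) f)) :
    IsRationalSeries f := by
  obtain ⟨q', p', hq0, hqf⟩ := hf
  obtain ⟨g, hg⟩ := (LinearMap.toSpanSingleton A B 1).exists_leftInverse_of_injective (by
    rw [LinearMap.ker_eq_bot]
    intro x y h
    apply (algebraMap A B).injective
    simpa [LinearMap.toSpanSingleton_apply, Algebra.algebraMap_eq_smul_one] using h)
  have hg1 : g 1 = 1 := by
    have := LinearMap.congr_fun hg 1
    simpa [LinearMap.toSpanSingleton_apply] using this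
  have hcoeff : ∀ (r : Polynomial B) (n : ℕ),
      (⟨AddMonoidAlgebra.ofCoeff (r.toFinsupp.coeff.mapRange g g.map_zero)⟩ : Polynomial A).coeff n = g (r.coeff n) := by
    intro r n
    simp [Polynomial.coeff_ofFinsupp, Finsupp.mapRange_apply, Polynomial.coeff,
      AddMonoidAlgebra.coeff_ofCoeff]
  refine ⟨⟨AddMonoidAlgebra.ofCoeff (q'.toFinsupp.coeff.mapRange g g.map_zero)⟩,
    ⟨AddMonoidAlgebra.ofCoeff (p'.toFinsupp.coeff.mapRange g g.map_zero)⟩, ?_, ?_⟩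
  · rw [hcoeff, hq0, hg1]
  · ext k
    have h1 := congrArg (fun s => g (PowerSeries.coeff k s)) hqf
    simp only [PowerSeries.coeff_mul, Polynomial.coeff_coe, map_sum] at h1 ⊢
    rw [hcoeff]
    rw [← h1]
    refine Finset.sum_congr rfl fun x hx => ?_
    rw [hcoeff, PowerSeries.coeff_map, mul_comm (q'.coeff x.1), ← Algebra.smul_def, map_smul,
      smul_eq_mul, mul_comm]
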